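/- Let α₁, α₂ ∈ ℂ \ ℝ with α₁ ∉ {α₂, ᾱ₂}, and let π₁, π₂ be Hermitian projections of ℂⁿ onto one-dimensional subspaces. Define Hermitian projections τ₁, τ₂ by Im τ₁ = g_{α₂,π₂}(α₁)(Im π₁) and Im τ₂ = g_{α₁,π₁}(α₂)(Im π₂) (assuming these images are nonzero). Then the permutability identity g_{α₂,τ₂}(λ) g_{α₁,π₁}(λ) = g_{α₁,τ₁}(λ) g_{α₂,π₂}(λ) holds for all λ where both sides are defined. -/

import Mathlib

open Matrix
open scoped BigOperators

/-- The simple rational loop g_{α,π}(λ) = π + ((λ−ᾱ)/(λ−α)) π^⊥. -/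
noncomputable def gsimple {n : ℕ} (α : ℂ) (π : Matrix (Fin n) (Fin n) ℂ) (l : ℂ) :
    Matrix (Fin n) (Fin n) ℂ :=
  π + ((l - (starRingEnd ℂ) α) / (l - α)) • ((1 : Matrix (Fin n) (Fin n) ℂ) - π)

/-- The Hermitian projection of ℂⁿ onto the line ℂv: vv*/‖v‖². -/
noncomputable def projLine {n : ℕ} (v : Fin n → ℂ) : Matrix (Fin n) (Fin n) ℂ :=
  (∑ k, (starRingEnd ℂ) (v k) * v k)⁻¹ •
    Matrix.of fun i j => v i * (starRingEnd ℂ) (v j)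

noncomputable def ip {n : ℕ} (u v : Fin n → ℂ) : ℂ := ∑ k, (starRingEnd ℂ) (u k) * v k

noncomputable def outer {n : ℕ} (u v : Fin n → ℂ) : Matrix (Fin n) (Fin n) ℂ :=
  Matrix.of fun i j => u i * (starRingEnd ℂ) (v j)

lemma projLine_eq {n : ℕ} (v : Fin n → ℂ) : projLine v = (ip v v)⁻¹ • outer v v := rfl

lemma conj_ip {n : ℕ} (u v : Fin n → ℂ) : (starRingEnd ℂ) (ip u v) = ip v u := by
  simp only [ip, map_sum, _root_.map_mul, Complex.conj_conj]
  exact Finset.sum_congr rfl fun k _ => mul_comm _ _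

lemma ip_self_ne_zero {n : ℕ} {v : Fin n → ℂ} (h : v ≠ 0) : ip v v ≠ 0 := by
  obtain ⟨k, hk⟩ := Function.ne_iff.mp h
  have he : ip v v = ((∑ k, Complex.normSq (v k) : ℝ) : ℂ) := by
    rw [ip]; push_cast
    exact Finset.sum_congr rfl fun k _ => by
      rw [mul_comm, Complex.mul_conj]
  rw [he]
  exact_mod_cast ne_of_gt (Finset.sum_pos'
    (fun i _ => Complex.normSq_nonneg _)
    ⟨k, Finset.mem_univ k, Complex.normSq_pos.mpr hk⟩)

lemma ip_smul_self {n : ℕ} (c : ℂ) (w : Fin n → ℂ) :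
    ip (c • w) (c • w) = ((starRingEnd ℂ) c * c) * ip w w := by
  simp only [ip, Pi.smul_apply, smul_eq_mul, _root_.map_mul, Finset.mul_sum]
  exact Finset.sum_congr rfl fun k _ => by ring

lemma outer_mul_outer {n : ℕ} (u v x y : Fin n → ℂ) :
    outer u v * outer x y = ip v x • outer u y := by
  ext i j
  simp only [outer, Matrix.mul_apply, Matrix.smul_apply, of_apply, ip, smul_eq_mul,
    Finset.sum_mul]
  exact Finset.sum_congr rfl fun k _ => by ring

lemma outer_comb {n : ℕ} (a b c d : ℂ) (x y z w : Fin n → ℂ) :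
    outer (a • x + b • y) (c • z + d • w) =
      (a * (starRingEnd ℂ) c) • outer x z + (a * (starRingEnd ℂ) d) • outer x w +
      (b * (starRingEnd ℂ) c) • outer y z + (b * (starRingEnd ℂ) d) • outer y w := by
  ext i j
  simp only [outer, of_apply, Pi.add_apply, Pi.smul_apply, smul_eq_mul, map_add, _root_.map_mul,
    Matrix.add_apply, Matrix.smul_apply]
  ring

lemma ip_comb {n : ℕ} (a b c d : ℂ) (x y z w : Fin n → ℂ) :
    ip (a • x + b • y) (c • z + d • w) =
      (starRingEnd ℂ) a * c * ip x z + (starRingEnd ℂ) a * d * ip x w +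
      (starRingEnd ℂ) b * c * ip y z + (starRingEnd ℂ) b * d * ip y w := by
  simp only [ip, Pi.add_apply, Pi.smul_apply, smul_eq_mul, map_add, _root_.map_mul,
    Finset.mul_sum, ← Finset.sum_add_distrib]
  exact Finset.sum_congr rfl fun k _ => by ring

lemma gsimple_projLine {n : ℕ} (α l : ℂ) (v : Fin n → ℂ) :
    gsimple α (projLine v) l =
      ((l - (starRingEnd ℂ) α) / (l - α)) • (1 : Matrix (Fin n) (Fin n) ℂ) +
      ((1 - (l - (starRingEnd ℂ) α) / (l - α)) * (ip v v)⁻¹) • outer v v := by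
  rw [gsimple, projLine_eq]
  module

lemma mulVec_form {n : ℕ} (c k : ℂ) (u v x : Fin n → ℂ) :
    (c • (1 : Matrix (Fin n) (Fin n) ℂ) + k • outer u v).mulVec x
      = c • x + (k * ip v x) • u := by
  funext i
  simp only [mulVec, dotProduct, Matrix.add_apply, Matrix.smul_apply, Matrix.one_apply,
    outer, of_apply, smul_eq_mul, Pi.add_apply, Pi.smul_apply, add_mul,
    Finset.sum_add_distrib, mul_ite, mul_one, mul_zero, ite_mul, zero_mul,
    Finset.sum_ite_eq, Finset.mem_univ, if_true, ip, Finset.mul_sum]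
  congr 1
  rw [Finset.sum_mul]
  exact Finset.sum_congr rfl fun j _ => by ring

lemma projLine_smul {n : ℕ} (c : ℂ) (hc : c ≠ 0) (v : Fin n → ℂ) :
    projLine (c • v) = projLine v := by
  ext i j
  have hc' : (starRingEnd ℂ) c ≠ 0 := by simpa using hc
  have hcc : (starRingEnd ℂ) c * c ≠ 0 := mul_ne_zero hc' hc
  simp only [projLine, Pi.smul_apply, smul_eq_mul, _root_.map_mul, of_apply,
    Matrix.smul_apply]
  rw [show (∑ x : Fin n, (starRingEnd ℂ) c * (starRingEnd ℂ) (v x) * (c * v x))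
      = ((starRingEnd ℂ) c * c) * ∑ k, (starRingEnd ℂ) (v k) * v k by
    rw [Finset.mul_sum]; exact Finset.sum_congr rfl fun k _ => by ring]
  rw [mul_inv, inv_mul_eq_div]
  field_simp

lemma gsimple_projLine' {n : ℕ} {α l : ℂ} (v : Fin n → ℂ) (hl : l - α ≠ 0)
    (hv : ip v v ≠ 0) :
    ((l - α) * ip v v) • gsimple α (projLine v) l
      = ((l - (starRingEnd ℂ) α) * ip v v) • (1 : Matrix (Fin n) (Fin n) ℂ)
        + ((starRingEnd ℂ) α - α) • outer v v := by
  rw [gsimple_projLine]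
  match_scalars
  · field_simp
  · field_simp
    ring

set_option maxHeartbeats 4000000 in
/-- Permutability: with τ₁, τ₂ the Hermitian projections onto
g_{α₂,π₂}(α₁)(Im π₁) and g_{α₁,π₁}(α₂)(Im π₂) respectively,
g_{α₂,τ₂} g_{α₁,π₁} = g_{α₁,τ₁} g_{α₂,π₂}. -/
theorem stmt13 {n : ℕ} (α₁ α₂ : ℂ) (h1 : α₁.im ≠ 0) (h2 : α₂.im ≠ 0)
    (hne : α₁ ≠ α₂) (hne' : α₁ ≠ (starRingEnd ℂ) α₂)
    (v₁ v₂ : Fin n → ℂ) (hv₁ : v₁ ≠ 0) (hv₂ : v₂ ≠ 0)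
    (w₁ w₂ : Fin n → ℂ)
    (hw₁ : w₁ = (gsimple α₂ (projLine v₂) α₁).mulVec v₁)
    (hw₂ : w₂ = (gsimple α₁ (projLine v₁) α₂).mulVec v₂)
    (hw₁0 : w₁ ≠ 0) (hw₂0 : w₂ ≠ 0) :
    ∀ l : ℂ, l ≠ α₁ → l ≠ α₂ →
      gsimple α₂ (projLine w₂) l * gsimple α₁ (projLine v₁) l =
        gsimple α₁ (projLine w₁) l * gsimple α₂ (projLine v₂) l := by
  intro l hl1 hl2
  have hN1 : ip v₁ v₁ ≠ 0 := ip_self_ne_zero hv₁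
  have hN2 : ip v₂ v₂ ≠ 0 := ip_self_ne_zero hv₂
  have ha12 : α₁ - α₂ ≠ 0 := sub_ne_zero.mpr hne
  have ha21 : α₂ - α₁ ≠ 0 := sub_ne_zero.mpr (Ne.symm hne)
  have hl1' : l - α₁ ≠ 0 := sub_ne_zero.mpr hl1
  have hl2' : l - α₂ ≠ 0 := sub_ne_zero.mpr hl2
  have hu1 : ((α₁ - α₂) * ip v₂ v₂) • w₁
      = ((α₁ - (starRingEnd ℂ) α₂) * ip v₂ v₂) • v₁
        + (((starRingEnd ℂ) α₂ - α₂) * ip v₂ v₁) • v₂ := by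
    rw [hw₁, gsimple_projLine, mulVec_form]
    funext i
    simp only [Pi.add_apply, Pi.smul_apply, smul_eq_mul]
    field_simp
    ring
  have hu2 : ((α₂ - α₁) * ip v₁ v₁) • w₂
      = (((starRingEnd ℂ) α₁ - α₁) * ip v₁ v₂) • v₁
        + ((α₂ - (starRingEnd ℂ) α₁) * ip v₁ v₁) • v₂ := by
    rw [hw₂, gsimple_projLine, mulVec_form]
    funext i
    simp only [Pi.add_apply, Pi.smul_apply, smul_eq_mul]
    field_simp
    ring
  have hs1 : (α₁ - α₂) * ip v₂ v₂ ≠ 0 := mul_ne_zero ha12 hN2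
  have hs2 : (α₂ - α₁) * ip v₁ v₁ ≠ 0 := mul_ne_zero ha21 hN1
  have hcs1 : (starRingEnd ℂ) ((α₁ - α₂) * ip v₂ v₂) ≠ 0 := by
    rw [starRingEnd_apply]; exact star_ne_zero.mpr hs1
  have hcs2 : (starRingEnd ℂ) ((α₂ - α₁) * ip v₁ v₁) ≠ 0 := by
    rw [starRingEnd_apply]; exact star_ne_zero.mpr hs2
  have hP1 : projLine w₁ = projLine (((α₁ - (starRingEnd ℂ) α₂) * ip v₂ v₂) • v₁ + (((starRingEnd ℂ) α₂ - α₂) * ip v₂ v₁) • v₂) := by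
    rw [← hu1, projLine_smul _ hs1]
  have hP2 : projLine w₂ = projLine ((((starRingEnd ℂ) α₁ - α₁) * ip v₁ v₂) • v₁ + ((α₂ - (starRingEnd ℂ) α₁) * ip v₁ v₁) • v₂) := by
    rw [← hu2, projLine_smul _ hs2]
  have hm1 : ip (((α₁ - (starRingEnd ℂ) α₂) * ip v₂ v₂) • v₁ + (((starRingEnd ℂ) α₂ - α₂) * ip v₂ v₁) • v₂) (((α₁ - (starRingEnd ℂ) α₂) * ip v₂ v₂) • v₁ + (((starRingEnd ℂ) α₂ - α₂) * ip v₂ v₁) • v₂) ≠ 0 := by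
    rw [← hu1, ip_smul_self]
    exact mul_ne_zero (mul_ne_zero hcs1 hs1) (ip_self_ne_zero hw₁0)
  have hm2 : ip ((((starRingEnd ℂ) α₁ - α₁) * ip v₁ v₂) • v₁ + ((α₂ - (starRingEnd ℂ) α₁) * ip v₁ v₁) • v₂) ((((starRingEnd ℂ) α₁ - α₁) * ip v₁ v₂) • v₁ + ((α₂ - (starRingEnd ℂ) α₁) * ip v₁ v₁) • v₂) ≠ 0 := by
    rw [← hu2, ip_smul_self]
    exact mul_ne_zero (mul_ne_zero hcs2 hs2) (ip_self_ne_zero hw₂0)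
  rw [hP1, hP2]
  have hS : (((l - α₂) * (ip ((((starRingEnd ℂ) α₁ - α₁) * ip v₁ v₂) • v₁ + ((α₂ - (starRingEnd ℂ) α₁) * ip v₁ v₁) • v₂) ((((starRingEnd ℂ) α₁ - α₁) * ip v₁ v₂) • v₁ + ((α₂ - (starRingEnd ℂ) α₁) * ip v₁ v₁) • v₂))) * ((l - α₁) * ip v₁ v₁) * (((l - α₁) * (ip (((α₁ - (starRingEnd ℂ) α₂) * ip v₂ v₂) • v₁ + (((starRingEnd ℂ) α₂ - α₂) * ip v₂ v₁) • v₂) (((α₁ - (starRingEnd ℂ) α₂) * ip v₂ v₂) • v₁ + (((starRingEnd ℂ) α₂ - α₂) * ip v₂ v₁) • v₂))) * ((l - α₂) * ip v₂ v₂))) ≠ 0 :=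
    mul_ne_zero (mul_ne_zero (mul_ne_zero hl2' hm2) (mul_ne_zero hl1' hN1))
      (mul_ne_zero (mul_ne_zero hl1' hm1) (mul_ne_zero hl2' hN2))
  apply smul_right_injective (Matrix (Fin n) (Fin n) ℂ) hS
  have hg2 := gsimple_projLine' (α := α₂) (l := l) ((((starRingEnd ℂ) α₁ - α₁) * ip v₁ v₂) • v₁ + ((α₂ - (starRingEnd ℂ) α₁) * ip v₁ v₁) • v₂) hl2' hm2
  have hg1 := gsimple_projLine' (α := α₁) (l := l) v₁ hl1' hN1
  have hf1 := gsimple_projLine' (α := α₁) (l := l) (((α₁ - (starRingEnd ℂ) α₂) * ip v₂ v₂) • v₁ + (((starRingEnd ℂ) α₂ - α₂) * ip v₂ v₁) • v₂) hl1' hm1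
  have hf2 := gsimple_projLine' (α := α₂) (l := l) v₂ hl2' hN2
  show (((l - α₂) * (ip ((((starRingEnd ℂ) α₁ - α₁) * ip v₁ v₂) • v₁ + ((α₂ - (starRingEnd ℂ) α₁) * ip v₁ v₁) • v₂) ((((starRingEnd ℂ) α₁ - α₁) * ip v₁ v₂) • v₁ + ((α₂ - (starRingEnd ℂ) α₁) * ip v₁ v₁) • v₂))) * ((l - α₁) * ip v₁ v₁) * (((l - α₁) * (ip (((α₁ - (starRingEnd ℂ) α₂) * ip v₂ v₂) • v₁ + (((starRingEnd ℂ) α₂ - α₂) * ip v₂ v₁) • v₂) (((α₁ - (starRingEnd ℂ) α₂) * ip v₂ v₂) • v₁ + (((starRingEnd ℂ) α₂ - α₂) * ip v₂ v₁) • v₂))) * ((l - α₂) * ip v₂ v₂))) • (gsimple α₂ (projLine ((((starRingEnd ℂ) α₁ - α₁) * ip v₁ v₂) • v₁ + ((α₂ - (starRingEnd ℂ) α₁) * ip v₁ v₁) • v₂)) l * gsimple α₁ (projLine v₁) l) = (((l - α₂) * (ip ((((starRingEnd ℂ) α₁ - α₁) * ip v₁ v₂) • v₁ + ((α₂ - (starRingEnd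 ℂ) α₁) * ip v₁ v₁) • v₂) ((((starRingEnd ℂ) α₁ - α₁) * ip v₁ v₂) • v₁ + ((α₂ - (starRingEnd ℂ) α₁) * ip v₁ v₁) • v₂))) * ((l - α₁) * ip v₁ v₁) * (((l - α₁) * (ip (((α₁ - (starRingEnd ℂ) α₂) * ip v₂ v₂) • v₁ + (((starRingEnd ℂ) α₂ - α₂) * ip v₂ v₁) • v₂) (((α₁ - (starRingEnd ℂ) α₂) * ip v₂ v₂) • v₁ + (((starRingEnd ℂ) α₂ - α₂) * ip v₂ v₁) • v₂))) * ((l - α₂) * ip v₂ v₂))) • (gsimple α₁ (projLine (((α₁ - (starRingEnd ℂ) α₂) * ip v₂ v₂) • v₁ + (((starRingEnd ℂ) α₂ - α₂) * ip v₂ v₁) • v₂)) l * gsimple α₂ (projLine v₂) l)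
  calc (((l - α₂) * (ip ((((starRingEnd ℂ) α₁ - α₁) * ip v₁ v₂) • v₁ + ((α₂ - (starRingEnd ℂ) α₁) * ip v₁ v₁) • v₂) ((((starRingEnd ℂ) α₁ - α₁) * ip v₁ v₂) • v₁ + ((α₂ - (starRingEnd ℂ) α₁) * ip v₁ v₁) • v₂))) * ((l - α₁) * ip v₁ v₁) * (((l - α₁) * (ip (((α₁ - (starRingEnd ℂ) α₂) * ip v₂ v₂) • v₁ + (((starRingEnd ℂ) α₂ - α₂) * ip v₂ v₁) • v₂) (((α₁ - (starRingEnd ℂ) α₂) * ip v₂ v₂) • v₁ + (((starRingEnd ℂ) α₂ - α₂) * ip v₂ v₁) • v₂))) * ((l - α₂) * ip v₂ v₂))) • (gsimple α₂ (projLine ((((starRingEnd ℂ) α₁ - α₁) * ip v₁ v₂) • v₁ + ((α₂ - (starRingEnd ℂ) α₁) * ip v₁ v₁) • v₂)) l * gsimple α₁ (projLine v₁) l)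
      = (((l - α₁) * (ip (((α₁ - (starRingEnd ℂ) α₂) * ip v₂ v₂) • v₁ + (((starRingEnd ℂ) α₂ - α₂) * ip v₂ v₁) • v₂) (((α₁ - (starRingEnd ℂ) α₂) * ip v₂ v₂) • v₁ + (((starRingEnd ℂ) α₂ - α₂) * ip v₂ v₁) • v₂))) * ((l - α₂) * ip v₂ v₂)) •
          ((((l - α₂) * (ip ((((starRingEnd ℂ) α₁ - α₁) * ip v₁ v₂) • v₁ + ((α₂ - (starRingEnd ℂ) α₁) * ip v₁ v₁) • v₂) ((((starRingEnd ℂ) α₁ - α₁) * ip v₁ v₂) • v₁ + ((α₂ - (starRingEnd ℂ) α₁) * ip v₁ v₁) • v₂))) • gsimple α₂ (projLine ((((starRingEnd ℂ) α₁ - α₁) * ip v₁ v₂) • v₁ + ((α₂ - (starRingEnd ℂ) α₁) * ip v₁ v₁) • v₂)) l) * (((l - α₁) * ip v₁ v₁) • gsimple α₁ (projLine v₁) l)) := by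
        simp only [smul_mul_assoc, mul_smul_comm, smul_smul]
        match_scalars
        ring
    _ = (((l - α₁) * (ip (((α₁ - (starRingEnd ℂ) α₂) * ip v₂ v₂) • v₁ + (((starRingEnd ℂ) α₂ - α₂) * ip v₂ v₁) • v₂) (((α₁ - (starRingEnd ℂ) α₂) * ip v₂ v₂) • v₁ + (((starRingEnd ℂ) α₂ - α₂) * ip v₂ v₁) • v₂))) * ((l - α₂) * ip v₂ v₂)) • ((((l - (starRingEnd ℂ) α₂) * (ip ((((starRingEnd ℂ) α₁ - α₁) * ip v₁ v₂) • v₁ + ((α₂ - (starRingEnd ℂ) α₁) * ip v₁ v₁) • v₂) ((((starRingEnd ℂ) α₁ - α₁) * ip v₁ v₂) • v₁ + ((α₂ - (starRingEnd ℂ) α₁) * ip v₁ v₁) • v₂))) • (1 : Matrix (Fin n) (Fin n) ℂ) + ((starRingEnd ℂ) α₂ - α₂) • outer ((((starRingEnd ℂ) α₁ - α₁) * ip v₁ v₂) • v₁ + ((α₂ - (starRingEnd ℂ) α₁) * ip v₁ v₁) • v₂) ((((starRingEnd ℂ) α₁ - α₁) * ip v₁ v₂) • v₁ + ((α₂ -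 (starRingEnd ℂ) α₁) * ip v₁ v₁) • v₂)) * (((l - (starRingEnd ℂ) α₁) * ip v₁ v₁) • (1 : Matrix (Fin n) (Fin n) ℂ) + ((starRingEnd ℂ) α₁ - α₁) • outer v₁ v₁)) := by
        rw [hg2, hg1]
    _ = (((l - α₂) * (ip ((((starRingEnd ℂ) α₁ - α₁) * ip v₁ v₂) • v₁ + ((α₂ - (starRingEnd ℂ) α₁) * ip v₁ v₁) • v₂) ((((starRingEnd ℂ) α₁ - α₁) * ip v₁ v₂) • v₁ + ((α₂ - (starRingEnd ℂ) α₁) * ip v₁ v₁) • v₂))) * ((l - α₁) * ip v₁ v₁)) • ((((l - (starRingEnd ℂ) α₁) * (ip (((α₁ - (starRingEnd ℂ) α₂) * ip v₂ v₂) • v₁ + (((starRingEnd ℂ) α₂ - α₂) * ip v₂ v₁) • v₂) (((α₁ - (starRingEnd ℂ) α₂) * ip v₂ v₂) • v₁ + (((starRingEnd ℂ) α₂ - α₂) * ip v₂ v₁) • v₂))) • (1 : Matrix (Fin n) (Fin n) ℂ) + ((starRingEnd ℂ) α₁ - α₁) • outer (((α₁ - (starRingEnd ℂ) α₂) * ip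 v₂ v₂) • v₁ + (((starRingEnd ℂ) α₂ - α₂) * ip v₂ v₁) • v₂) (((α₁ - (starRingEnd ℂ) α₂) * ip v₂ v₂) • v₁ + (((starRingEnd ℂ) α₂ - α₂) * ip v₂ v₁) • v₂)) * (((l - (starRingEnd ℂ) α₂) * ip v₂ v₂) • (1 : Matrix (Fin n) (Fin n) ℂ) + ((starRingEnd ℂ) α₂ - α₂) • outer v₂ v₂)) := by
        simp only [ip_comb, outer_comb]
        simp only [_root_.map_mul, map_sub, Complex.conj_conj, conj_ip]
        simp only [add_mul, mul_add, smul_mul_assoc, mul_smul_comm, Matrix.mul_one,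
          Matrix.one_mul, outer_mul_outer, smul_smul, smul_add]
        match_scalars <;> ring
    _ = (((l - α₂) * (ip ((((starRingEnd ℂ) α₁ - α₁) * ip v₁ v₂) • v₁ + ((α₂ - (starRingEnd ℂ) α₁) * ip v₁ v₁) • v₂) ((((starRingEnd ℂ) α₁ - α₁) * ip v₁ v₂) • v₁ + ((α₂ - (starRingEnd ℂ) α₁) * ip v₁ v₁) • v₂))) * ((l - α₁) * ip v₁ v₁)) •
          ((((l - α₁) * (ip (((α₁ - (starRingEnd ℂ) α₂) * ip v₂ v₂) • v₁ + (((starRingEnd ℂ) α₂ - α₂) * ip v₂ v₁) • v₂) (((α₁ - (starRingEnd ℂ) α₂) * ip v₂ v₂) • v₁ + (((starRingEnd ℂ) α₂ - α₂) * ip v₂ v₁) • v₂))) • gsimple α₁ (projLine (((α₁ - (starRingEnd ℂ) α₂) * ip v₂ v₂) • v₁ + (((starRingEnd ℂ) α₂ - α₂) * ip v₂ v₁) • v₂)) l) * (((l - α₂) * ip v₂ v₂) • gsimple α₂ (projLine v₂) l)) := by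
        rw [hf1, hf2]
    _ = (((l - α₂) * (ip ((((starRingEnd ℂ) α₁ - α₁) * ip v₁ v₂) • v₁ + ((α₂ - (starRingEnd ℂ) α₁) * ip v₁ v₁) • v₂) ((((starRingEnd ℂ) α₁ - α₁) * ip v₁ v₂) • v₁ + ((α₂ - (starRingEnd ℂ) α₁) * ip v₁ v₁) • v₂))) * ((l - α₁) * ip v₁ v₁) * (((l - α₁) * (ip (((α₁ - (starRingEnd ℂ) α₂) * ip v₂ v₂) • v₁ + (((starRingEnd ℂ) α₂ - α₂) * ip v₂ v₁) • v₂) (((α₁ - (starRingEnd ℂ) α₂) * ip v₂ v₂) • v₁ + (((starRingEnd ℂ) α₂ - α₂) * ip v₂ v₁) • v₂))) * ((l - α₂) * ip v₂ v₂))) • (gsimple α₁ (projLine (((α₁ - (starRingEnd ℂ) α₂) * ip v₂ v₂) • v₁ + (((starRingEnd ℂ) α₂ - α₂) * ip v₂ v₁) • v₂)) l * gsimple α₂ (projLine v₂) l) := by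
        simp only [smul_mul_assoc, mul_smul_comm, smul_smul]
        match_scalars
        ring
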